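/- Let Ω ⊆ ℝ² be open, α, β ∈ ℝ, let σ̃, φ̃ : ℝ×ℝ² → ℝ and u : ℝ×ℝ² → ℝ² be twice continuously differentiable on ℝ×Ω, and let σ̂ : ℝ² → ℝ be twice continuously differentiable on Ω. Assume that on ℝ×Ω: (i) 2∂_t σ̃ + 2u·∇σ̃ + σ̃ div u + 2u·∇σ̂ + σ̂ div u = 0, and (ii) 2∂_t u + 2(u·∇)u + σ̃∇σ̃ + σ̃∇σ̂ + σ̂∇σ̃ = −2αu + 2β∇φ̃. Define M := u·∇(∂_t σ̃) + div(∂_t(σ̃u)) + (∂_t u)·∇σ̃ + 2(∂_t u)·∇σ̂ and N := 2(u·∇)u + σ̃∇σ̃ + σ̃∇σ̂ + 2αu − 2β∇φ̃. Then on ℝ×Ω: 4∂²_t σ̃ − div(σ̂²∇σ̃) = −2M + div(σ̂N) − N·∇σ̂ − σ̂(∇σ̃·∇σ̂). -/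

import Mathlib

/-- Partial derivative in the time variable of a function of `(t, x, y)`. -/
noncomputable def pt (f : ℝ → ℝ → ℝ → ℝ) : ℝ → ℝ → ℝ → ℝ :=
  fun t x y => deriv (fun s => f s x y) t

/-- Partial derivative in the first space variable of a function of `(t, x, y)`. -/
noncomputable def px (f : ℝ → ℝ → ℝ → ℝ) : ℝ → ℝ → ℝ → ℝ :=
  fun t x y => deriv (fun s => f t s y) x

/-- Partial derivative in the second space variable of a function of `(t, x, y)`. -/
noncomputable def py (f : ℝ → ℝ → ℝ → ℝ) : ℝ → ℝ → ℝ → ℝ :=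
  fun t x y => deriv (fun s => f t x s) y

/-- Partial derivative in the first variable of a function of `(x, y)`. -/
noncomputable def qx (f : ℝ → ℝ → ℝ) : ℝ → ℝ → ℝ :=
  fun x y => deriv (fun s => f s y) x

/-- Partial derivative in the second variable of a function of `(x, y)`. -/
noncomputable def qy (f : ℝ → ℝ → ℝ) : ℝ → ℝ → ℝ :=
  fun x y => deriv (fun s => f x s) y

section WaveHelpers

open Filter

private lemma hline_t {F : ℝ × ℝ × ℝ → ℝ} {t x y : ℝ}
    (h : DifferentiableAt ℝ F (t, x, y)) :
    HasDerivAt (fun s => F (s, x, y)) (fderiv ℝ F (t, x, y) (1, 0, 0)) t := by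
  have h1 : HasDerivAt (fun s : ℝ => ((s, x, y) : ℝ × ℝ × ℝ)) (1, 0, 0) t := by
    simpa [Prod.mk_zero_zero] using HasDerivAt.prodMk (hasDerivAt_id t) (hasDerivAt_const t ((x, y) : ℝ × ℝ))
  simpa [Function.comp_def] using h.hasFDerivAt.comp_hasDerivAt t h1

private lemma hline_x {F : ℝ × ℝ × ℝ → ℝ} {t x y : ℝ}
    (h : DifferentiableAt ℝ F (t, x, y)) :
    HasDerivAt (fun s => F (t, s, y)) (fderiv ℝ F (t, x, y) (0, 1, 0)) x := by
  have h1 : HasDerivAt (fun s : ℝ => ((t, s, y) : ℝ × ℝ × ℝ)) (0, 1, 0) x := by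
    simpa using HasDerivAt.prodMk (hasDerivAt_const x t) (HasDerivAt.prodMk (hasDerivAt_id x) (hasDerivAt_const x y))
  simpa [Function.comp_def] using h.hasFDerivAt.comp_hasDerivAt x h1

private lemma hline_y {F : ℝ × ℝ × ℝ → ℝ} {t x y : ℝ}
    (h : DifferentiableAt ℝ F (t, x, y)) :
    HasDerivAt (fun s => F (t, x, s)) (fderiv ℝ F (t, x, y) (0, 0, 1)) y := by
  have h1 : HasDerivAt (fun s : ℝ => ((t, x, s) : ℝ × ℝ × ℝ)) (0, 0, 1) y := by
    simpa using HasDerivAt.prodMk (hasDerivAt_const y t) (HasDerivAt.prodMk (hasDerivAt_const y x) (hasDerivAt_id y))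
  simpa [Function.comp_def] using h.hasFDerivAt.comp_hasDerivAt y h1

private lemma hline2_x {F : ℝ × ℝ → ℝ} {x y : ℝ}
    (h : DifferentiableAt ℝ F (x, y)) :
    HasDerivAt (fun s => F (s, y)) (fderiv ℝ F (x, y) (1, 0)) x := by
  have h1 : HasDerivAt (fun s : ℝ => ((s, y) : ℝ × ℝ)) (1, 0) x := by
    simpa using HasDerivAt.prodMk (hasDerivAt_id x) (hasDerivAt_const x y)
  simpa [Function.comp_def] using h.hasFDerivAt.comp_hasDerivAt x h1

private lemma hline2_y {F : ℝ × ℝ → ℝ} {x y : ℝ}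
    (h : DifferentiableAt ℝ F (x, y)) :
    HasDerivAt (fun s => F (x, s)) (fderiv ℝ F (x, y) (0, 1)) y := by
  have h1 : HasDerivAt (fun s : ℝ => ((x, s) : ℝ × ℝ)) (0, 1) y := by
    simpa using HasDerivAt.prodMk (hasDerivAt_const y x) (hasDerivAt_id y)
  simpa [Function.comp_def] using h.hasFDerivAt.comp_hasDerivAt y h1

private lemma hline2nd_t {F : ℝ × ℝ × ℝ → ℝ} {t x y : ℝ}
    (h : DifferentiableAt ℝ (fderiv ℝ F) (t, x, y)) (w : ℝ × ℝ × ℝ) :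
    HasDerivAt (fun s => fderiv ℝ F (s, x, y) w)
      (fderiv ℝ (fderiv ℝ F) (t, x, y) (1, 0, 0) w) t := by
  have h2 : DifferentiableAt ℝ (fun p => fderiv ℝ F p w) (t, x, y) :=
    h.clm_apply (differentiableAt_const w)
  have h3 := hline_t h2
  rw [fderiv_clm_apply h (differentiableAt_const w)] at h3
  simpa using h3

private lemma hline2nd_x {F : ℝ × ℝ × ℝ → ℝ} {t x y : ℝ}
    (h : DifferentiableAt ℝ (fderiv ℝ F) (t, x, y)) (w : ℝ × ℝ × ℝ) :
    HasDerivAt (fun s => fderiv ℝ F (t, s, y) w)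
      (fderiv ℝ (fderiv ℝ F) (t, x, y) (0, 1, 0) w) x := by
  have h2 : DifferentiableAt ℝ (fun p => fderiv ℝ F p w) (t, x, y) :=
    h.clm_apply (differentiableAt_const w)
  have h3 := hline_x h2
  rw [fderiv_clm_apply h (differentiableAt_const w)] at h3
  simpa using h3

private lemma hline2nd_y {F : ℝ × ℝ × ℝ → ℝ} {t x y : ℝ}
    (h : DifferentiableAt ℝ (fderiv ℝ F) (t, x, y)) (w : ℝ × ℝ × ℝ) :
    HasDerivAt (fun s => fderiv ℝ F (t, x, s) w)
      (fderiv ℝ (fderiv ℝ F) (t, x, y) (0, 0, 1) w) y := by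
  have h2 : DifferentiableAt ℝ (fun p => fderiv ℝ F p w) (t, x, y) :=
    h.clm_apply (differentiableAt_const w)
  have h3 := hline_y h2
  rw [fderiv_clm_apply h (differentiableAt_const w)] at h3
  simpa using h3

private lemma symm_second {F : ℝ × ℝ × ℝ → ℝ} {U : Set (ℝ × ℝ × ℝ)} (hU : IsOpen U)
    (hF : ContDiffOn ℝ 2 F U) {q : ℝ × ℝ × ℝ} (hq : q ∈ U) (v w : ℝ × ℝ × ℝ) :
    fderiv ℝ (fderiv ℝ F) q v w = fderiv ℝ (fderiv ℝ F) q w v := by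
  have hev : ∀ᶠ p in nhds q, HasFDerivAt F (fderiv ℝ F p) p := by
    filter_upwards [hU.mem_nhds hq] with p hp
    exact ((hF.differentiableOn two_ne_zero).differentiableAt (hU.mem_nhds hp)).hasFDerivAt
  have hx : HasFDerivAt (fderiv ℝ F) (fderiv ℝ (fderiv ℝ F) q) q :=
    (((hF.fderiv_of_isOpen (m := 1) hU (by norm_num)).differentiableOn one_ne_zero).differentiableAt
      (hU.mem_nhds hq)).hasFDerivAt
  exact second_derivative_symmetric_of_eventually hev hx v w

end WaveHelpers

/-- The non-homogeneous wave equation with non-constant speed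
`4∂²_tσ̃ - div(σ̂²∇σ̃) = -2M + div(σ̂N) - N·∇σ̂ - σ̂(∇σ̃·∇σ̂)` satisfied by the density
perturbation of the sound-speed-transformed vasculogenesis model with quadratic
pressure. -/
theorem perturbation_wave_equation
    (Ω : Set (ℝ × ℝ)) (hΩ : IsOpen Ω) (α β : ℝ)
    (σt φt : ℝ → ℝ → ℝ → ℝ) (u₁ u₂ : ℝ → ℝ → ℝ → ℝ) (σh : ℝ → ℝ → ℝ)
    (hσt : ContDiffOn ℝ 2 (fun q : ℝ × ℝ × ℝ => σt q.1 q.2.1 q.2.2)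
      {q : ℝ × ℝ × ℝ | q.2 ∈ Ω})
    (hφt : ContDiffOn ℝ 2 (fun q : ℝ × ℝ × ℝ => φt q.1 q.2.1 q.2.2)
      {q : ℝ × ℝ × ℝ | q.2 ∈ Ω})
    (hu₁ : ContDiffOn ℝ 2 (fun q : ℝ × ℝ × ℝ => u₁ q.1 q.2.1 q.2.2)
      {q : ℝ × ℝ × ℝ | q.2 ∈ Ω})
    (hu₂ : ContDiffOn ℝ 2 (fun q : ℝ × ℝ × ℝ => u₂ q.1 q.2.1 q.2.2)
      {q : ℝ × ℝ × ℝ | q.2 ∈ Ω})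
    (hσh : ContDiffOn ℝ 2 (fun p : ℝ × ℝ => σh p.1 p.2) Ω)
    -- (i) transformed continuity equation
    (hi : ∀ (t x y : ℝ), (x, y) ∈ Ω →
      2 * pt σt t x y + 2 * (u₁ t x y * px σt t x y + u₂ t x y * py σt t x y) +
        σt t x y * (px u₁ t x y + py u₂ t x y) +
        2 * (u₁ t x y * qx σh x y + u₂ t x y * qy σh x y) +
        σh x y * (px u₁ t x y + py u₂ t x y) = 0)
    -- (ii) transformed momentum equation
    (hii₁ : ∀ (t x y : ℝ), (x, y) ∈ Ω →
      2 * pt u₁ t x y + 2 * (u₁ t x y * px u₁ t x y + u₂ t x y * py u₁ t x y) +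
        σt t x y * px σt t x y + σt t x y * qx σh x y + σh x y * px σt t x y
        = -2 * α * u₁ t x y + 2 * β * px φt t x y)
    (hii₂ : ∀ (t x y : ℝ), (x, y) ∈ Ω →
      2 * pt u₂ t x y + 2 * (u₁ t x y * px u₂ t x y + u₂ t x y * py u₂ t x y) +
        σt t x y * py σt t x y + σt t x y * qy σh x y + σh x y * py σt t x y
        = -2 * α * u₂ t x y + 2 * β * py φt t x y)
    (M N₁ N₂ : ℝ → ℝ → ℝ → ℝ)
    (hM : ∀ t x y : ℝ, M t x y =
      u₁ t x y * px (pt σt) t x y + u₂ t x y * py (pt σt) t x y +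
      (px (pt (fun a b c => σt a b c * u₁ a b c)) t x y +
        py (pt (fun a b c => σt a b c * u₂ a b c)) t x y) +
      (pt u₁ t x y * px σt t x y + pt u₂ t x y * py σt t x y) +
      2 * (pt u₁ t x y * qx σh x y + pt u₂ t x y * qy σh x y))
    (hN₁ : ∀ t x y : ℝ, N₁ t x y =
      2 * (u₁ t x y * px u₁ t x y + u₂ t x y * py u₁ t x y) +
        σt t x y * px σt t x y + σt t x y * qx σh x y +
        2 * α * u₁ t x y - 2 * β * px φt t x y)
    (hN₂ : ∀ t x y : ℝ, N₂ t x y =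
      2 * (u₁ t x y * px u₂ t x y + u₂ t x y * py u₂ t x y) +
        σt t x y * py σt t x y + σt t x y * qy σh x y +
        2 * α * u₂ t x y - 2 * β * py φt t x y) :
    ∀ (t x y : ℝ), (x, y) ∈ Ω →
      4 * pt (pt σt) t x y -
        (deriv (fun s => (σh s y) ^ 2 * px σt t s y) x +
         deriv (fun s => (σh x s) ^ 2 * py σt t x s) y)
      = -2 * M t x y +
        (deriv (fun s => σh s y * N₁ t s y) x +
         deriv (fun s => σh x s * N₂ t x s) y) -
        (N₁ t x y * qx σh x y + N₂ t x y * qy σh x y) -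
        σh x y * (px σt t x y * qx σh x y + py σt t x y * qy σh x y) := by
  intro t x y hxy
  set Fσ : ℝ × ℝ × ℝ → ℝ := fun q : ℝ × ℝ × ℝ => σt q.1 q.2.1 q.2.2 with hFσdef
  set F1 : ℝ × ℝ × ℝ → ℝ := fun q : ℝ × ℝ × ℝ => u₁ q.1 q.2.1 q.2.2 with hF1def
  set F2 : ℝ × ℝ × ℝ → ℝ := fun q : ℝ × ℝ × ℝ => u₂ q.1 q.2.1 q.2.2 with hF2def
  have hU : IsOpen {q : ℝ × ℝ × ℝ | q.2 ∈ Ω} := hΩ.preimage continuous_snd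
  -- first-order differentiability
  have dσ : ∀ t' x' y' : ℝ, (x', y') ∈ Ω → DifferentiableAt ℝ Fσ (t', x', y') :=
    fun t' x' y' h => (hσt.differentiableOn two_ne_zero).differentiableAt (hU.mem_nhds h)
  have d1 : ∀ t' x' y' : ℝ, (x', y') ∈ Ω → DifferentiableAt ℝ F1 (t', x', y') :=
    fun t' x' y' h => (hu₁.differentiableOn two_ne_zero).differentiableAt (hU.mem_nhds h)
  have d2 : ∀ t' x' y' : ℝ, (x', y') ∈ Ω → DifferentiableAt ℝ F2 (t', x', y') :=
    fun t' x' y' h => (hu₂.differentiableOn two_ne_zero).differentiableAt (hU.mem_nhds h)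
  -- second-order differentiability
  have hfdσ : ContDiffOn ℝ 1 (fderiv ℝ Fσ) {q : ℝ × ℝ × ℝ | q.2 ∈ Ω} :=
    hσt.fderiv_of_isOpen hU (by norm_num)
  have hfd1 : ContDiffOn ℝ 1 (fderiv ℝ F1) {q : ℝ × ℝ × ℝ | q.2 ∈ Ω} :=
    hu₁.fderiv_of_isOpen hU (by norm_num)
  have hfd2 : ContDiffOn ℝ 1 (fderiv ℝ F2) {q : ℝ × ℝ × ℝ | q.2 ∈ Ω} :=
    hu₂.fderiv_of_isOpen hU (by norm_num)
  have d2σ : ∀ t' x' y' : ℝ, (x', y') ∈ Ω → DifferentiableAt ℝ (fderiv ℝ Fσ) (t', x', y') :=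
    fun t' x' y' h => (hfdσ.differentiableOn one_ne_zero).differentiableAt (hU.mem_nhds h)
  have d2u1 : ∀ t' x' y' : ℝ, (x', y') ∈ Ω → DifferentiableAt ℝ (fderiv ℝ F1) (t', x', y') :=
    fun t' x' y' h => (hfd1.differentiableOn one_ne_zero).differentiableAt (hU.mem_nhds h)
  have d2u2 : ∀ t' x' y' : ℝ, (x', y') ∈ Ω → DifferentiableAt ℝ (fderiv ℝ F2) (t', x', y') :=
    fun t' x' y' h => (hfd2.differentiableOn one_ne_zero).differentiableAt (hU.mem_nhds h)
  -- first-order partials as directional derivatives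
  have Eσt : ∀ t' x' y' : ℝ, (x', y') ∈ Ω →
      pt σt t' x' y' = fderiv ℝ Fσ (t', x', y') (1, 0, 0) :=
    fun t' x' y' h => (hline_t (dσ t' x' y' h)).deriv
  have Eσx : ∀ t' x' y' : ℝ, (x', y') ∈ Ω →
      px σt t' x' y' = fderiv ℝ Fσ (t', x', y') (0, 1, 0) :=
    fun t' x' y' h => (hline_x (dσ t' x' y' h)).deriv
  have Eσy : ∀ t' x' y' : ℝ, (x', y') ∈ Ω →
      py σt t' x' y' = fderiv ℝ Fσ (t', x', y') (0, 0, 1) :=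
    fun t' x' y' h => (hline_y (dσ t' x' y' h)).deriv
  have E1t : ∀ t' x' y' : ℝ, (x', y') ∈ Ω →
      pt u₁ t' x' y' = fderiv ℝ F1 (t', x', y') (1, 0, 0) :=
    fun t' x' y' h => (hline_t (d1 t' x' y' h)).deriv
  have E1x : ∀ t' x' y' : ℝ, (x', y') ∈ Ω →
      px u₁ t' x' y' = fderiv ℝ F1 (t', x', y') (0, 1, 0) :=
    fun t' x' y' h => (hline_x (d1 t' x' y' h)).deriv
  have E2t : ∀ t' x' y' : ℝ, (x', y') ∈ Ω →
      pt u₂ t' x' y' = fderiv ℝ F2 (t', x', y') (1, 0, 0) :=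
    fun t' x' y' h => (hline_t (d2 t' x' y' h)).deriv
  have E2y : ∀ t' x' y' : ℝ, (x', y') ∈ Ω →
      py u₂ t' x' y' = fderiv ℝ F2 (t', x', y') (0, 0, 1) :=
    fun t' x' y' h => (hline_y (d2 t' x' y' h)).deriv
  -- eventual membership along coordinate lines
  have hevx : ∀ᶠ s in nhds x, (s, y) ∈ Ω :=
    (continuous_id.prodMk continuous_const).continuousAt.preimage_mem_nhds (hΩ.mem_nhds hxy)
  have hevy : ∀ᶠ s in nhds y, (x, s) ∈ Ω :=
    (continuous_const.prodMk continuous_id).continuousAt.preimage_mem_nhds (hΩ.mem_nhds hxy)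
  -- symmetry of second derivatives
  have Sσtx : fderiv ℝ (fderiv ℝ Fσ) (t, x, y) (1, 0, 0) (0, 1, 0)
      = fderiv ℝ (fderiv ℝ Fσ) (t, x, y) (0, 1, 0) (1, 0, 0) :=
    symm_second hU hσt hxy _ _
  have Sσty : fderiv ℝ (fderiv ℝ Fσ) (t, x, y) (1, 0, 0) (0, 0, 1)
      = fderiv ℝ (fderiv ℝ Fσ) (t, x, y) (0, 0, 1) (1, 0, 0) :=
    symm_second hU hσt hxy _ _
  have S1tx : fderiv ℝ (fderiv ℝ F1) (t, x, y) (1, 0, 0) (0, 1, 0)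
      = fderiv ℝ (fderiv ℝ F1) (t, x, y) (0, 1, 0) (1, 0, 0) :=
    symm_second hU hu₁ hxy _ _
  have S2ty : fderiv ℝ (fderiv ℝ F2) (t, x, y) (1, 0, 0) (0, 0, 1)
      = fderiv ℝ (fderiv ℝ F2) (t, x, y) (0, 0, 1) (1, 0, 0) :=
    symm_second hU hu₂ hxy _ _
  -- the momentum equation determines N
  have hNx : ∀ s : ℝ, (s, y) ∈ Ω → N₁ t s y
      = -2 * fderiv ℝ F1 (t, s, y) (1, 0, 0) - σh s y * fderiv ℝ Fσ (t, s, y) (0, 1, 0) := by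
    intro s hs
    rw [← E1t t s y hs, ← Eσx t s y hs]
    have h1 := hii₁ t s y hs
    have h2 := hN₁ t s y
    linarith
  have hNy : ∀ s : ℝ, (x, s) ∈ Ω → N₂ t x s
      = -2 * fderiv ℝ F2 (t, x, s) (1, 0, 0) - σh x s * fderiv ℝ Fσ (t, x, s) (0, 0, 1) := by
    intro s hs
    rw [← E2t t x s hs, ← Eσy t x s hs]
    have h1 := hii₂ t x s hs
    have h2 := hN₂ t x s
    linarith
  -- derivatives of the steady state
  have dh : DifferentiableAt ℝ (fun p : ℝ × ℝ => σh p.1 p.2) (x, y) :=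
    (hσh.differentiableOn two_ne_zero).differentiableAt (hΩ.mem_nhds hxy)
  have hh1 : HasDerivAt (fun s => σh s y) (qx σh x y) x :=
    (hline2_x dh).differentiableAt.hasDerivAt
  have hh2 : HasDerivAt (fun s => σh x s) (qy σh x y) y :=
    (hline2_y dh).differentiableAt.hasDerivAt
  -- rewriting the second-order terms of the goal
  have R1 : pt (pt σt) t x y = fderiv ℝ (fderiv ℝ Fσ) (t, x, y) (1, 0, 0) (1, 0, 0) :=
    ((hline2nd_t (d2σ t x y hxy) (1, 0, 0)).congr_of_eventuallyEq
      (Filter.Eventually.of_forall fun s => Eσt s x y hxy)).deriv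
  have R2 : px (pt σt) t x y = fderiv ℝ (fderiv ℝ Fσ) (t, x, y) (0, 1, 0) (1, 0, 0) :=
    ((hline2nd_x (d2σ t x y hxy) (1, 0, 0)).congr_of_eventuallyEq
      (by filter_upwards [hevx] with s hs; exact Eσt t s y hs)).deriv
  have R3 : py (pt σt) t x y = fderiv ℝ (fderiv ℝ Fσ) (t, x, y) (0, 0, 1) (1, 0, 0) :=
    ((hline2nd_y (d2σ t x y hxy) (1, 0, 0)).congr_of_eventuallyEq
      (by filter_upwards [hevy] with s hs; exact Eσt t x s hs)).deriv
  have R4 : px (pt (fun a b c => σt a b c * u₁ a b c)) t x y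
      = fderiv ℝ (fderiv ℝ Fσ) (t, x, y) (0, 1, 0) (1, 0, 0) * u₁ t x y +
          fderiv ℝ Fσ (t, x, y) (1, 0, 0) * fderiv ℝ F1 (t, x, y) (0, 1, 0) +
        (fderiv ℝ Fσ (t, x, y) (0, 1, 0) * fderiv ℝ F1 (t, x, y) (1, 0, 0) +
          σt t x y * fderiv ℝ (fderiv ℝ F1) (t, x, y) (0, 1, 0) (1, 0, 0)) := by
    have base := ((hline2nd_x (d2σ t x y hxy) (1, 0, 0)).mul (hline_x (d1 t x y hxy))).add
      ((hline_x (dσ t x y hxy)).mul (hline2nd_x (d2u1 t x y hxy) (1, 0, 0)))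
    exact (base.congr_of_eventuallyEq (by
      filter_upwards [hevx] with s hs
      exact ((hline_t (dσ t s y hs)).mul (hline_t (d1 t s y hs))).deriv)).deriv
  have R5 : py (pt (fun a b c => σt a b c * u₂ a b c)) t x y
      = fderiv ℝ (fderiv ℝ Fσ) (t, x, y) (0, 0, 1) (1, 0, 0) * u₂ t x y +
          fderiv ℝ Fσ (t, x, y) (1, 0, 0) * fderiv ℝ F2 (t, x, y) (0, 0, 1) +
        (fderiv ℝ Fσ (t, x, y) (0, 0, 1) * fderiv ℝ F2 (t, x, y) (1, 0, 0) +
          σt t x y * fderiv ℝ (fderiv ℝ F2) (t, x, y) (0, 0, 1) (1, 0, 0)) := by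
    have base := ((hline2nd_y (d2σ t x y hxy) (1, 0, 0)).mul (hline_y (d2 t x y hxy))).add
      ((hline_y (dσ t x y hxy)).mul (hline2nd_y (d2u2 t x y hxy) (1, 0, 0)))
    exact (base.congr_of_eventuallyEq (by
      filter_upwards [hevy] with s hs
      exact ((hline_t (dσ t x s hs)).mul (hline_t (d2 t x s hs))).deriv)).deriv
  have R6 : deriv (fun s => (σh s y) ^ 2 * px σt t s y) x
      = (qx σh x y * σh x y + σh x y * qx σh x y) * fderiv ℝ Fσ (t, x, y) (0, 1, 0) +
        σh x y * σh x y * fderiv ℝ (fderiv ℝ Fσ) (t, x, y) (0, 1, 0) (0, 1, 0) := by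
    have base := (hh1.mul hh1).mul (hline2nd_x (d2σ t x y hxy) (0, 1, 0))
    refine (base.congr_of_eventuallyEq ?_).deriv
    filter_upwards [hevx] with s hs
    rw [Eσx t s y hs]; simp only [Pi.mul_apply]; ring
  have R7 : deriv (fun s => (σh x s) ^ 2 * py σt t x s) y
      = (qy σh x y * σh x y + σh x y * qy σh x y) * fderiv ℝ Fσ (t, x, y) (0, 0, 1) +
        σh x y * σh x y * fderiv ℝ (fderiv ℝ Fσ) (t, x, y) (0, 0, 1) (0, 0, 1) := by
    have base := (hh2.mul hh2).mul (hline2nd_y (d2σ t x y hxy) (0, 0, 1))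
    refine (base.congr_of_eventuallyEq ?_).deriv
    filter_upwards [hevy] with s hs
    rw [Eσy t x s hs]; simp only [Pi.mul_apply]; ring
  have R8 : deriv (fun s => σh s y * N₁ t s y) x
      = qx σh x y * (-2 * fderiv ℝ F1 (t, x, y) (1, 0, 0) -
          σh x y * fderiv ℝ Fσ (t, x, y) (0, 1, 0)) +
        σh x y * (-2 * fderiv ℝ (fderiv ℝ F1) (t, x, y) (0, 1, 0) (1, 0, 0) -
          (qx σh x y * fderiv ℝ Fσ (t, x, y) (0, 1, 0) +
            σh x y * fderiv ℝ (fderiv ℝ Fσ) (t, x, y) (0, 1, 0) (0, 1, 0))) := by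
    have base := hh1.mul (((hline2nd_x (d2u1 t x y hxy) (1, 0, 0)).const_mul (-2 : ℝ)).sub
      (hh1.mul (hline2nd_x (d2σ t x y hxy) (0, 1, 0))))
    refine (base.congr_of_eventuallyEq ?_).deriv
    filter_upwards [hevx] with s hs
    rw [hNx s hs]
    rfl
  have R9 : deriv (fun s => σh x s * N₂ t x s) y
      = qy σh x y * (-2 * fderiv ℝ F2 (t, x, y) (1, 0, 0) -
          σh x y * fderiv ℝ Fσ (t, x, y) (0, 0, 1)) +
        σh x y * (-2 * fderiv ℝ (fderiv ℝ F2) (t, x, y) (0, 0, 1) (1, 0, 0) -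
          (qy σh x y * fderiv ℝ Fσ (t, x, y) (0, 0, 1) +
            σh x y * fderiv ℝ (fderiv ℝ Fσ) (t, x, y) (0, 0, 1) (0, 0, 1))) := by
    have base := hh2.mul (((hline2nd_y (d2u2 t x y hxy) (1, 0, 0)).const_mul (-2 : ℝ)).sub
      (hh2.mul (hline2nd_y (d2σ t x y hxy) (0, 0, 1))))
    refine (base.congr_of_eventuallyEq ?_).deriv
    filter_upwards [hevy] with s hs
    rw [hNy s hs]
    rfl
  -- the time derivative of the continuity equation
  have h_a := (hline2nd_t (d2σ t x y hxy) ((1 : ℝ), (0 : ℝ), (0 : ℝ))).const_mul (2 : ℝ)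
  have h_b := (((hline_t (d1 t x y hxy)).mul (hline2nd_t (d2σ t x y hxy) (0, 1, 0))).add
    ((hline_t (d2 t x y hxy)).mul (hline2nd_t (d2σ t x y hxy) (0, 0, 1)))).const_mul (2 : ℝ)
  have h_c := (hline_t (dσ t x y hxy)).mul ((hline2nd_t (d2u1 t x y hxy) (0, 1, 0)).add
    (hline2nd_t (d2u2 t x y hxy) (0, 0, 1)))
  have h_d := (((hline_t (d1 t x y hxy)).mul_const (qx σh x y)).add
    ((hline_t (d2 t x y hxy)).mul_const (qy σh x y))).const_mul (2 : ℝ)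
  have h_e := ((hline2nd_t (d2u1 t x y hxy) (0, 1, 0)).add
    (hline2nd_t (d2u2 t x y hxy) (0, 0, 1))).const_mul (σh x y)
  have HE1 : HasDerivAt (fun s => 2 * pt σt s x y +
      2 * (u₁ s x y * px σt s x y + u₂ s x y * py σt s x y) +
      σt s x y * (px u₁ s x y + py u₂ s x y) +
      2 * (u₁ s x y * qx σh x y + u₂ s x y * qy σh x y) +
      σh x y * (px u₁ s x y + py u₂ s x y))
      (2 * fderiv ℝ (fderiv ℝ Fσ) (t, x, y) (1, 0, 0) (1, 0, 0) +
        2 * ((fderiv ℝ F1 (t, x, y) (1, 0, 0) * fderiv ℝ Fσ (t, x, y) (0, 1, 0) +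
              u₁ t x y * fderiv ℝ (fderiv ℝ Fσ) (t, x, y) (1, 0, 0) (0, 1, 0)) +
             (fderiv ℝ F2 (t, x, y) (1, 0, 0) * fderiv ℝ Fσ (t, x, y) (0, 0, 1) +
              u₂ t x y * fderiv ℝ (fderiv ℝ Fσ) (t, x, y) (1, 0, 0) (0, 0, 1))) +
        (fderiv ℝ Fσ (t, x, y) (1, 0, 0) *
            (fderiv ℝ F1 (t, x, y) (0, 1, 0) + fderiv ℝ F2 (t, x, y) (0, 0, 1)) +
          σt t x y * (fderiv ℝ (fderiv ℝ F1) (t, x, y) (1, 0, 0) (0, 1, 0) +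
            fderiv ℝ (fderiv ℝ F2) (t, x, y) (1, 0, 0) (0, 0, 1))) +
        2 * (fderiv ℝ F1 (t, x, y) (1, 0, 0) * qx σh x y +
             fderiv ℝ F2 (t, x, y) (1, 0, 0) * qy σh x y) +
        σh x y * (fderiv ℝ (fderiv ℝ F1) (t, x, y) (1, 0, 0) (0, 1, 0) +
          fderiv ℝ (fderiv ℝ F2) (t, x, y) (1, 0, 0) (0, 0, 1))) t := by
    refine ((((h_a.add h_b).add h_c).add h_d).add h_e).congr_of_eventuallyEq
      (Filter.Eventually.of_forall fun s => ?_)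
    beta_reduce
    rw [Eσt s x y hxy, Eσx s x y hxy, Eσy s x y hxy, E1x s x y hxy, E2y s x y hxy]
    rfl
  have HE0 : HasDerivAt (fun s => 2 * pt σt s x y +
      2 * (u₁ s x y * px σt s x y + u₂ s x y * py σt s x y) +
      σt s x y * (px u₁ s x y + py u₂ s x y) +
      2 * (u₁ s x y * qx σh x y + u₂ s x y * qy σh x y) +
      σh x y * (px u₁ s x y + py u₂ s x y)) 0 t :=
    (hasDerivAt_const t (0 : ℝ)).congr_of_eventuallyEq
      (Filter.Eventually.of_forall fun s => hi s x y hxy)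
  have E1 := HE1.unique HE0
  rw [Sσtx, Sσty, S1tx, S2ty] at E1
  -- assemble the wave equation
  have hn1 := hNx x hxy
  have hn2 := hNy y hxy
  rw [hM t x y, hn1, hn2, R1, R2, R3, R4, R5, R6, R7, R8, R9,
    Eσx t x y hxy, Eσy t x y hxy, E1t t x y hxy, E2t t x y hxy]
  linear_combination 2 * E1
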